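/- Let N : ℕ → ℕ → ℕ satisfy the recurrence N(ℓ,1) = 1 for all ℓ ≥ 1; N(1,m) = m − 1 for all m ≥ 2; N(ℓ,m) = N(m,m) for all ℓ > m ≥ 2; and N(ℓ,m) = ∑_{j=1}^{m−1} N(ℓ−1,j) for all 2 ≤ ℓ ≤ m. Then for all m ≥ 4 and all ℓ with 2 ≤ ℓ ≤ m − 2, N(ℓ−1, m) < N(ℓ, m); that is, increasing the recursive level strictly increases the circuit capacity in this range. -/

import Mathlib

theorem capacity_strict_mono_in_level
    (N : ℕ → ℕ → ℕ)
    (h1 : ∀ l, 1 ≤ l → N l 1 = 1)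
    (h2 : ∀ m, 2 ≤ m → N 1 m = m - 1)
    (h3 : ∀ l m, 2 ≤ m → m < l → N l m = N m m)
    (h4 : ∀ l m, 2 ≤ l → l ≤ m → N l m = ∑ j ∈ Finset.Icc 1 (m - 1), N (l - 1) j) :
    ∀ m, 4 ≤ m → ∀ l, 2 ≤ l → l ≤ m - 2 → N (l - 1) m < N l m := by
  -- weak monotonicity in the level
  have mono : ∀ l, 1 ≤ l → ∀ m, 1 ≤ m → N l m ≤ N (l + 1) m := by
    intro l hl
    induction l, hl using Nat.le_induction with
    | base =>
      intro m hm
      rcases Nat.lt_or_ge m 2 with hm2 | hm2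
      · have : m = 1 := by omega
        subst this
        rw [h1 1 (by omega), h1 2 (by omega)]
      · rw [h2 m hm2, h4 2 m (by omega) hm2]
        show m - 1 ≤ ∑ j ∈ Finset.Icc 1 (m - 1), N 1 j
        calc m - 1 = ∑ _j ∈ Finset.Icc 1 (m - 1), 1 := by
              simp [Nat.card_Icc]
          _ ≤ ∑ j ∈ Finset.Icc 1 (m - 1), N 1 j := by
              apply Finset.sum_le_sum
              intro j hj
              simp only [Finset.mem_Icc] at hj
              rcases Nat.lt_or_ge j 2 with hj2 | hj2
              · have : j = 1 := by omega
                subst this; rw [h1 1 (by omega)]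
              · rw [h2 j hj2]; omega
    | succ l hl ih =>
      intro m hm
      rcases Nat.lt_or_ge m 2 with hm2 | hm2
      · have : m = 1 := by omega
        subst this
        rw [h1 (l+1) (by omega), h1 (l+2) (by omega)]
      · rcases Nat.lt_or_ge m (l+1) with hcase | hcase
        · rw [h3 (l+1) m hm2 hcase, h3 (l+2) m hm2 (by omega)]
        · rcases eq_or_lt_of_le hcase with heq | hlt
          · rw [h3 (l+2) m hm2 (by omega), ← heq]
          · rw [h4 (l+1) m (by omega) (by omega), h4 (l+2) m (by omega) (by omega)]
            simp only [Nat.add_sub_cancel]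
            apply Finset.sum_le_sum
            intro j hj
            simp only [Finset.mem_Icc] at hj
            exact ih j hj.1
  -- strict monotonicity
  have strict : ∀ l, 2 ≤ l → ∀ m, l + 2 ≤ m → N (l - 1) m < N l m := by
    intro l hl
    induction l, hl using Nat.le_induction with
    | base =>
      intro m hm
      rw [h2 m (by omega), h4 2 m (by omega) (by omega)]
      show m - 1 < ∑ j ∈ Finset.Icc 1 (m - 1), N 1 j
      calc m - 1 = ∑ _j ∈ Finset.Icc 1 (m - 1), 1 := by
            simp [Nat.card_Icc]
        _ < ∑ j ∈ Finset.Icc 1 (m - 1), N 1 j := by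
            apply Finset.sum_lt_sum
            · intro j hj
              simp only [Finset.mem_Icc] at hj
              rcases Nat.lt_or_ge j 2 with hj2 | hj2
              · have : j = 1 := by omega
                subst this; rw [h1 1 (by omega)]
              · rw [h2 j hj2]; omega
            · refine ⟨3, ?_, ?_⟩
              · simp only [Finset.mem_Icc]; omega
              · rw [h2 3 (by omega)]; omega
    | succ l hl ih =>
      intro m hm
      have h1' : N l m = ∑ j ∈ Finset.Icc 1 (m - 1), N (l - 1) j := by
        rw [h4 l m hl (by omega)]
      have h2' : N (l + 1) m = ∑ j ∈ Finset.Icc 1 (m - 1), N l j := by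
        rw [h4 (l+1) m (by omega) (by omega)]
        simp only [Nat.add_sub_cancel]
      simp only [Nat.add_sub_cancel, h1', h2']
      apply Finset.sum_lt_sum
      · intro j hj
        simp only [Finset.mem_Icc] at hj
        have := mono (l - 1) (by omega) j hj.1
        have hrw : l - 1 + 1 = l := by omega
        rwa [hrw] at this
      · refine ⟨m - 1, ?_, ?_⟩
        · simp only [Finset.mem_Icc]; omega
        · exact ih (m - 1) (by omega)
  intro m hm l hl hlm
  exact strict l hl m (by omega)
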